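/- Let q be a prime power, n ≥ 1, and let a_0, a_1, …, a_{n−1} ∈ F_{q^n}. If there exists u ∈ F_q such that Tr_{q^n/q}(a_0 + a_1 x^{q−1} + a_2 x^{q^2−1} + ⋯ + a_{n−1} x^{q^{n−1}−1}) = u for every nonzero x ∈ F_{q^n}, then a_1 = a_2 = ⋯ = a_{n−1} = 0 and Tr_{q^n/q}(a_0) = u. Consequently, the F_q-vector space of functions F_{q^n}∖{0} → F_q of the form x ↦ Tr_{q^n/q}(a_0 + Σ_{i=1}^{n−1} a_i x^{q^i−1}), with a_0, …, a_{n−1} ranging over F_{q^n}, has dimension n^2 − n + 1 over F_q. -/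

import Mathlib

open Finset Polynomial

-- number theory sublemma
lemma pow_sum_eq {q m i0 j : ℕ} (hq : 2 ≤ q) (hi0 : 1 ≤ i0)
    (h : q ^ m + 1 = q ^ i0 + q ^ j) : m = i0 ∧ j = 0 := by
  have hj : j = 0 := by
    by_contra hj
    have hj1 : 1 ≤ j := by omega
    have d1 : q ∣ q ^ j := dvd_pow_self q (by omega)
    have d2 : q ∣ q ^ i0 := dvd_pow_self q (by omega)
    rcases Nat.eq_zero_or_pos m with hm | hm
    · have h2 : q ≤ q ^ i0 := by
        calc q = q ^ 1 := (pow_one q).symm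
        _ ≤ q ^ i0 := Nat.pow_le_pow_right (by omega) hi0
      have h3 : q ≤ q ^ j := by
        calc q = q ^ 1 := (pow_one q).symm
        _ ≤ q ^ j := Nat.pow_le_pow_right (by omega) hj1
      simp [hm] at h; omega
    · have d3 : q ∣ q ^ m := dvd_pow_self q (by omega)
      have : q ∣ 1 := by
        have : 1 = (q ^ i0 + q ^ j) - q ^ m := by omega
        rw [this]
        exact Nat.dvd_sub (Nat.dvd_add d2 d1) d3
      have := Nat.le_of_dvd one_pos this; omega
  subst hj
  simp only [pow_zero] at h
  have : q ^ m = q ^ i0 := by omega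
  exact ⟨Nat.pow_right_injective hq this, rfl⟩

lemma inner_rw {E : Type*} [Field E] {q n : ℕ} (hn : 1 ≤ n) (b : ℕ → E) (x : E) :
    b 0 + ∑ i ∈ Finset.Icc 1 (n - 1), b i * x ^ (q ^ i - 1)
      = ∑ i ∈ Finset.range n, b i * x ^ (q ^ i - 1) := by
  have hr : Finset.range n = insert 0 (Finset.Icc 1 (n - 1)) := by
    ext m; simp only [Finset.mem_range, Finset.mem_insert, Finset.mem_Icc]; omega
  rw [hr, Finset.sum_insert (by simp)]
  simp

theorem key (q n : ℕ) (hq : ∃ p k : ℕ, p.Prime ∧ 0 < k ∧ q = p ^ k) (hn : 1 ≤ n)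
    (E : Type*) [Field E] [Fintype E] (hE : Fintype.card E = q ^ n)
    (a : ℕ → E) (u : E)
    (hyp : ∀ x : E, x ≠ 0 →
      ∑ j ∈ Finset.range n, (∑ i ∈ Finset.range n, a i * x ^ (q ^ i - 1)) ^ q ^ j = u) :
    (∀ i : ℕ, 1 ≤ i → i ≤ n - 1 → a i = 0) ∧
      ∑ j ∈ Finset.range n, (a 0) ^ q ^ j = u := by
  classical
  obtain ⟨p, k, hp, hk, hqdef⟩ := hq
  haveI : Fact p.Prime := ⟨hp⟩
  have hq2 : 2 ≤ q := by
    rw [hqdef]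
    calc 2 = 2 ^ 1 := rfl
    _ ≤ 2 ^ k := Nat.pow_le_pow_right (by omega) hk
    _ ≤ p ^ k := Nat.pow_le_pow_left hp.two_le k
  -- characteristic
  have hcharP : CharP E p := by
    obtain ⟨r, hr⟩ := CharP.exists E
    haveI := hr
    obtain ⟨m, hrp, hcard⟩ := FiniteField.card E r
    have : r = p := by
      have h1 : r ∣ p ^ (k * n) := by
        have h2 : (r:ℕ) ∣ Fintype.card E := by
          rw [hcard]; exact dvd_pow_self r m.pos.ne'
        rwa [hE, hqdef, ← pow_mul] at h2
      have := Nat.Prime.dvd_of_dvd_pow hrp h1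
      exact (Nat.prime_dvd_prime_iff_eq hrp hp).mp this
    rwa [this] at hr
  haveI := hcharP
  -- Frobenius-sum lemma
  have fsum : ∀ {ι : Type} (s : Finset ι) (f : ι → E) (j : ℕ),
      (∑ i ∈ s, f i) ^ q ^ j = ∑ i ∈ s, (f i) ^ q ^ j := by
    intro ι s f j
    have : q ^ j = p ^ (k * j) := by rw [hqdef, ← pow_mul]
    rw [this, sum_pow_char_pow]
  have xqn : ∀ x : E, x ^ q ^ n = x := by
    intro x; rw [← hE]; exact FiniteField.pow_card x
  have xqmod : ∀ m : ℕ, ∀ x : E, x ^ q ^ m = x ^ q ^ (m % n) := by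
    intro m
    induction m using Nat.strong_induction_on with
    | _ m ih =>
      intro x
      rcases lt_or_ge m n with h | h
      · rw [Nat.mod_eq_of_lt h]
      · have h1 : m = (m - n) + n := by omega
        have h2 : x ^ q ^ ((m - n) + n) = x ^ q ^ (m - n) := by
          rw [pow_add, pow_mul, xqn]
        rw [h1, h2, ih (m - n) (by omega) x, Nat.add_mod_right]
  set e : ℕ → ℕ → ℕ := fun i j => q ^ ((i + j) % n) + (q ^ (n - 1) - q ^ j) with he
  have step2 : ∀ (x : E), ∀ j ∈ Finset.range n,
      (∑ i ∈ Finset.range n, a i * x ^ (q ^ i - 1)) ^ q ^ j * x ^ q ^ (n - 1)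
        = ∑ i ∈ Finset.range n, (a i) ^ q ^ j * x ^ (e i j) := by
    intro x j hj
    rw [fsum, Finset.sum_mul]
    refine Finset.sum_congr rfl fun i _ => ?_
    rw [mul_pow, mul_assoc]
    congr 1
    rw [← pow_mul, ← pow_add]
    have e2 : 1 ≤ q ^ i := Nat.one_le_pow _ _ (by omega)
    have e3 : q ^ j ≤ q ^ (n - 1) :=
      Nat.pow_le_pow_right (by omega) (by have := Finset.mem_range.mp hj; omega)
    have e4 : (q ^ i - 1) * q ^ j = q ^ (i + j) - q ^ j := by
      rw [Nat.sub_mul, one_mul, pow_add]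
    have e5 : q ^ j ≤ q ^ (i + j) := Nat.pow_le_pow_right (by omega) (by omega)
    have h1 : (q ^ i - 1) * q ^ j + q ^ (n - 1) = q ^ (i + j) + (q ^ (n - 1) - q ^ j) := by
      omega
    rw [h1, pow_add, xqmod (i + j) x, ← pow_add]
  set P : Polynomial E :=
    (∑ j ∈ Finset.range n, ∑ i ∈ Finset.range n, C ((a i) ^ q ^ j) * X ^ (e i j))
      - C u * X ^ (q ^ (n - 1)) with hP
  have heval : ∀ x : E, P.eval x = 0 := by
    intro x
    have hev : P.eval x = (∑ j ∈ Finset.range n, ∑ i ∈ Finset.range n,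
        (a i) ^ q ^ j * x ^ (e i j)) - u * x ^ q ^ (n - 1) := by
      simp [hP, eval_finset_sum]
    rw [hev]
    by_cases hx : x = 0
    · subst hx
      have h1 : ∀ j ∈ Finset.range n, ∀ i ∈ Finset.range n,
          (a i) ^ q ^ j * (0:E) ^ (e i j) = 0 := by
        intro j _ i _
        have : e i j ≠ 0 := by
          have : 1 ≤ q ^ ((i + j) % n) := Nat.one_le_pow _ _ (by omega)
          simp only [he]; omega
        rw [zero_pow this, mul_zero]
      rw [Finset.sum_congr rfl fun j hj => Finset.sum_congr rfl (h1 j hj)]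
      have : q ^ (n - 1) ≠ 0 := by positivity
      simp [this]; exact Or.inr fun h => absurd h (by omega)
    · rw [Finset.sum_congr rfl fun j hj => (step2 x j hj).symm, ← Finset.sum_mul, hyp x hx,
        sub_self]
  have hdeg : P.natDegree < Fintype.card E := by
    have hb : ∀ j ∈ Finset.range n, ∀ i ∈ Finset.range n, e i j ≤ 2 * q ^ (n - 1) - 1 := by
      intro j hj i hi
      have h1 : q ^ ((i + j) % n) ≤ q ^ (n - 1) :=
        Nat.pow_le_pow_right (by omega) (by have := Nat.mod_lt (i + j) (show 0 < n by omega); omega)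
      have h2 : 1 ≤ q ^ j := Nat.one_le_pow _ _ (by omega)
      simp only [he]; omega
    have hd1 : P.natDegree ≤ 2 * q ^ (n - 1) - 1 := by
      have hq1 : 1 ≤ q ^ (n - 1) := Nat.one_le_pow _ _ (by omega)
      refine le_trans (natDegree_sub_le _ _) (max_le ?_ ?_)
      · refine natDegree_sum_le_of_forall_le _ _ fun j hj => ?_
        refine natDegree_sum_le_of_forall_le _ _ fun i hi => ?_
        exact le_trans (natDegree_C_mul_le _ _) (by rw [natDegree_X_pow]; exact hb j hj i hi)
      · exact le_trans (natDegree_C_mul_le _ _) (by rw [natDegree_X_pow]; omega)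
    have hcard : 2 * q ^ (n - 1) - 1 < Fintype.card E := by
      rw [hE]
      have h1 : q ^ n = q ^ (n - 1) * q := by
        rw [← pow_succ]; congr 1; omega
      have h2 : q ^ (n - 1) * 2 ≤ q ^ (n - 1) * q := Nat.mul_le_mul_left _ hq2
      have hq1 : 1 ≤ q ^ (n - 1) := Nat.one_le_pow _ _ (by omega)
      omega
    omega
  have hP0 : P = 0 := by
    refine Polynomial.eq_zero_of_natDegree_lt_card_of_eval_eq_zero' P Finset.univ
      (fun i _ => heval i) ?_
    rwa [Finset.card_univ]
  -- uniqueness of exponents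
  have huniq : ∀ i0, 1 ≤ i0 → i0 ≤ n - 1 → ∀ j ∈ Finset.range n, ∀ i ∈ Finset.range n,
      e i j = e i0 0 → i = i0 ∧ j = 0 := by
    intro i0 h1 h2 j hj i hi he'
    have hjn : j < n := Finset.mem_range.mp hj
    have hin : i < n := Finset.mem_range.mp hi
    have hm : (i + j) % n < n := Nat.mod_lt _ (by omega)
    have e3 : q ^ j ≤ q ^ (n - 1) := Nat.pow_le_pow_right (by omega) (by omega)
    have e3' : (1:ℕ) ≤ q ^ (n - 1) := Nat.one_le_pow _ _ (by omega)
    have e6 : 1 ≤ q ^ j := Nat.one_le_pow _ _ (by omega)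
    have e7 : 1 ≤ q ^ ((i + j) % n) := Nat.one_le_pow _ _ (by omega)
    have hi0n : i0 < n := by omega
    have hmod : (i0 + 0) % n = i0 := by rw [Nat.add_zero, Nat.mod_eq_of_lt hi0n]
    simp only [he, hmod, pow_zero] at he'
    have heq : q ^ ((i + j) % n) + 1 = q ^ i0 + q ^ j := by omega
    obtain ⟨hm', hj'⟩ := pow_sum_eq hq2 h1 heq
    subst hj'
    rw [Nat.add_zero, Nat.mod_eq_of_lt hin] at hm'
    exact ⟨hm', rfl⟩
  have part1 : ∀ i : ℕ, 1 ≤ i → i ≤ n - 1 → a i = 0 := by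
    intro i0 h1 h2
    have hc := congrArg (fun pp => Polynomial.coeff pp (e i0 0)) hP0
    simp only [hP, coeff_zero, coeff_sub, finset_sum_coeff, coeff_C_mul, coeff_X_pow] at hc
    have hne : e i0 0 ≠ q ^ (n - 1) := by
      have hmod : (i0 + 0) % n = i0 := by rw [Nat.add_zero, Nat.mod_eq_of_lt (by omega)]
      have hqle : q ≤ q ^ i0 := by
        calc q = q ^ 1 := (pow_one q).symm
        _ ≤ q ^ i0 := Nat.pow_le_pow_right (by omega) h1
      have e3' : (1:ℕ) ≤ q ^ (n - 1) := Nat.one_le_pow _ _ (by omega)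
      simp only [he, hmod, pow_zero]; omega
    rw [if_neg hne] at hc
    have hsum : ∑ j ∈ Finset.range n, ∑ i ∈ Finset.range n,
        (a i) ^ q ^ j * (if e i0 0 = e i j then (1:E) else 0) = a i0 := by
      rw [Finset.sum_eq_single_of_mem 0 (Finset.mem_range.mpr (by omega))]
      · rw [Finset.sum_eq_single_of_mem i0 (Finset.mem_range.mpr (by omega))]
        · simp
        · intro i hi hii0
          rw [if_neg, mul_zero]
          intro h
          exact hii0 ((huniq i0 h1 h2 0 (Finset.mem_range.mpr (by omega)) i hi h.symm).1)
      · intro j hj hj0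
        refine Finset.sum_eq_zero fun i hi => ?_
        rw [if_neg, mul_zero]
        intro h
        exact hj0 ((huniq i0 h1 h2 j hj i hi h.symm).2)
    rw [hsum] at hc
    simpa using hc
  refine ⟨part1, ?_⟩
  have h1 := hyp 1 one_ne_zero
  have h2 : ∑ i ∈ Finset.range n, a i * (1:E) ^ (q ^ i - 1) = a 0 := by
    rw [Finset.sum_eq_single_of_mem 0 (Finset.mem_range.mpr (by omega))]
    · simp
    · intro i hi hi0
      rw [part1 i (by omega) (by have := Finset.mem_range.mp hi; omega), zero_mul]
  rwa [h2] at h1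

lemma card_root_le {E : Type*} [Field E] [Fintype E] (R : Polynomial E) (hR : R ≠ 0) :
    Nat.card {c : E // R.eval c = 0} ≤ R.natDegree := by
  classical
  have h1 : {c : E | R.eval c = 0} ⊆ ↑R.roots.toFinset := by
    intro c hc
    simp only [Finset.coe_sort_coe, Multiset.mem_toFinset, Finset.mem_coe, mem_roots', ne_eq]
    exact ⟨hR, hc⟩
  calc Nat.card {c : E // R.eval c = 0} = ({c : E | R.eval c = 0} : Set E).ncard :=
        Nat.card_coe_set_eq _
    _ ≤ (↑R.roots.toFinset : Set E).ncard := Set.ncard_le_ncard h1 (Set.toFinite _)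
    _ = R.roots.toFinset.card := Set.ncard_coe_finset _
    _ ≤ Multiset.card R.roots := Multiset.toFinset_card_le _
    _ ≤ R.natDegree := R.card_roots'

lemma trace_ker_card (q n : ℕ) (p k : ℕ) (hp : p.Prime) (hk : 0 < k) (hqdef : q = p ^ k)
    (hn : 1 ≤ n) (E : Type*) [Field E] [Fintype E] [Fact p.Prime] [CharP E p]
    (hE : Fintype.card E = q ^ n) :
    Nat.card {c : E // ∑ j ∈ Finset.range n, c ^ q ^ j = 0} = q ^ (n - 1) := by
  classical
  have hq2 : 2 ≤ q := by
    rw [hqdef]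
    calc 2 = 2 ^ 1 := rfl
    _ ≤ 2 ^ k := Nat.pow_le_pow_right (by omega) hk
    _ ≤ p ^ k := Nat.pow_le_pow_left hp.two_le k
  have fsum : ∀ {ι : Type} (s : Finset ι) (f : ι → E) (j : ℕ),
      (∑ i ∈ s, f i) ^ q ^ j = ∑ i ∈ s, (f i) ^ q ^ j := by
    intro ι s f j
    have h : q ^ j = p ^ (k * j) := by rw [hqdef, ← pow_mul]
    rw [h, sum_pow_char_pow]
  have xqn : ∀ x : E, x ^ q ^ n = x := by
    intro x; rw [← hE]; exact FiniteField.pow_card x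
  set T : E → E := fun c => ∑ j ∈ Finset.range n, c ^ q ^ j with hT
  have Tadd : ∀ y z : E, T (y + z) = T y + T z := by
    intro y z
    simp only [hT]
    rw [← Finset.sum_add_distrib]
    refine Finset.sum_congr rfl fun j _ => ?_
    have h : q ^ j = p ^ (k * j) := by rw [hqdef, ← pow_mul]
    rw [h, add_pow_char_pow]
  -- upper bound
  have upper : Nat.card {c : E // T c = 0} ≤ q ^ (n - 1) := by
    set Q : Polynomial E := ∑ j ∈ Finset.range n, X ^ q ^ j with hQ
    have hQcoeff : Q.coeff (q ^ (n - 1)) = 1 := by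
      rw [hQ, finset_sum_coeff]
      rw [Finset.sum_eq_single_of_mem (n - 1) (Finset.mem_range.mpr (by omega))]
      · rw [coeff_X_pow, if_pos rfl]
      · intro j hj hjne
        rw [coeff_X_pow, if_neg]
        intro h
        exact hjne (Nat.pow_right_injective hq2 h.symm)
    have hQne : Q ≠ 0 := fun h => by simp [h] at hQcoeff
    have hQdeg : Q.natDegree ≤ q ^ (n - 1) := by
      refine natDegree_sum_le_of_forall_le _ _ fun j hj => ?_
      rw [natDegree_X_pow]
      exact Nat.pow_le_pow_right (by omega) (by have := Finset.mem_range.mp hj; omega)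
    have heval : ∀ c : E, Q.eval c = T c := by
      intro c; simp [hQ, hT, eval_finset_sum]
    calc Nat.card {c : E // T c = 0} = Nat.card {c : E // Q.eval c = 0} :=
          Nat.card_congr (Equiv.subtypeEquivRight fun c => by rw [heval c])
      _ ≤ Q.natDegree := card_root_le Q hQne
      _ ≤ q ^ (n - 1) := hQdeg
  -- additive hom
  set τ : E →+ E := AddMonoidHom.mk' T Tadd with hτ
  have hrange_le : Nat.card ↥τ.range ≤ q := by
    have hfix : ∀ c : E, c ∈ τ.range → c ^ q = c := by
      rintro c ⟨y, rfl⟩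
      show (T y) ^ q = T y
      have h1 : (T y) ^ q = ∑ j ∈ Finset.range n, y ^ q ^ (j + 1) := by
        simp only [hT]
        have : (∑ j ∈ Finset.range n, y ^ q ^ j) ^ q
            = (∑ j ∈ Finset.range n, y ^ q ^ j) ^ q ^ 1 := by rw [pow_one]
        rw [this, fsum]
        refine Finset.sum_congr rfl fun j _ => ?_
        rw [← pow_mul, ← pow_add]
      rw [h1]
      have h2 : (∑ j ∈ Finset.range n, y ^ q ^ (j + 1)) + y ^ q ^ 0
          = (∑ j ∈ Finset.range n, y ^ q ^ j) + y ^ q ^ n :=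
        (Finset.sum_range_succ' (fun j => y ^ q ^ j) n).symm.trans
          (Finset.sum_range_succ (fun j => y ^ q ^ j) n)
      have h3 : y ^ q ^ 0 = y := by rw [pow_zero, pow_one]
      have h4 := xqn y
      rw [h3, h4] at h2
      have := add_right_cancel h2
      rw [this]
    have hinj : Function.Injective
        (fun c : ↥τ.range => (⟨c.1, hfix c.1 c.2⟩ : {c : E // c ^ q = c})) := by
      intro a b h
      have h2 := congrArg Subtype.val h
      exact Subtype.ext h2
    calc Nat.card ↥τ.range ≤ Nat.card {c : E // c ^ q = c} :=
          Nat.card_le_card_of_injective _ hinj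
      _ ≤ q := by
          set R : Polynomial E := X ^ q - X with hR
          have hRcoeff : R.coeff q = 1 := by
            rw [hR, coeff_sub, coeff_X_pow, if_pos rfl, Polynomial.coeff_X, if_neg (by omega)]
            ring
          have hRne : R ≠ 0 := fun h => by simp [h] at hRcoeff
          have hRdeg : R.natDegree ≤ q := by
            refine le_trans (natDegree_sub_le _ _) (max_le ?_ ?_)
            · rw [natDegree_X_pow]
            · rw [natDegree_X]; omega
          calc Nat.card {c : E // c ^ q = c} = Nat.card {c : E // R.eval c = 0} :=
                Nat.card_congr (Equiv.subtypeEquivRight fun c => by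
                  rw [hR]; simp [sub_eq_zero])
            _ ≤ R.natDegree := card_root_le R hRne
            _ ≤ q := hRdeg
  have hcount : Nat.card E = Nat.card ↥τ.range * Nat.card ↥τ.ker := by
    rw [AddSubgroup.card_eq_card_quotient_mul_card_addSubgroup τ.ker]
    congr 1
    exact Nat.card_congr (QuotientAddGroup.quotientKerEquivRange τ).toEquiv
  have hkerEq : Nat.card ↥τ.ker = Nat.card {c : E // T c = 0} :=
    Nat.card_congr (Equiv.subtypeEquivRight fun c => AddMonoidHom.mem_ker)
  rw [hkerEq] at hcount
  have hcardE : Nat.card E = q ^ n := by rw [Nat.card_eq_fintype_card, hE]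
  rw [hcardE] at hcount
  set ck := Nat.card {c : E // T c = 0} with hck
  set r := Nat.card ↥τ.range with hr
  have hqn : q ^ n = q * q ^ (n - 1) := by
    rw [← pow_succ']
    congr 1
    omega
  have h5 : r * ck ≤ q * ck := Nat.mul_le_mul_right ck hrange_le
  have h6 : q * q ^ (n - 1) ≤ q * ck := by omega
  have h7 : q ^ (n - 1) ≤ ck := Nat.le_of_mul_le_mul_left h6 (by omega)
  exact le_antisymm upper h7


/-- if `Tr_{q^n/q}(a_0 + Σ_{i=1}^{n−1} a_i x^{q^i−1}) = u ∈ F_q` for every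
nonzero `x ∈ F_{q^n}`, then `a_1 = ⋯ = a_{n−1} = 0` and `Tr_{q^n/q}(a_0) = u`.
Consequently the `F_q`-space of functions `F_{q^n}∖{0} → F_q` of this form has
dimension `n² − n + 1` over `F_q`, i.e. it has exactly `q^{n²−n+1}` elements. -/
theorem stmt_13 (q n : ℕ) (hq : ∃ p k : ℕ, p.Prime ∧ 0 < k ∧ q = p ^ k) (hn : 1 ≤ n)
    (E : Type*) [Field E] [Fintype E] (hE : Fintype.card E = q ^ n) :
    (∀ (a : ℕ → E) (u : E), u ^ q = u →
      (∀ x : E, x ≠ 0 →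
        ∑ j ∈ Finset.range n,
          (a 0 + ∑ i ∈ Finset.Icc 1 (n - 1), a i * x ^ (q ^ i - 1)) ^ q ^ j = u) →
      (∀ i : ℕ, 1 ≤ i → i ≤ n - 1 → a i = 0) ∧
        ∑ j ∈ Finset.range n, (a 0) ^ q ^ j = u) ∧
    Set.ncard {f : {x : E // x ≠ 0} → E | ∃ a : ℕ → E, ∀ x : {x : E // x ≠ 0},
        f x = ∑ j ∈ Finset.range n,
          (a 0 + ∑ i ∈ Finset.Icc 1 (n - 1), a i * (x : E) ^ (q ^ i - 1)) ^ q ^ j}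
      = q ^ (n ^ 2 - n + 1) := by

  classical
  have hn0 : 0 < n := hn
  obtain ⟨p, k, hp, hk, hqdef⟩ := hq
  haveI : Fact p.Prime := ⟨hp⟩
  have hq2 : 2 ≤ q := by
    rw [hqdef]
    calc 2 = 2 ^ 1 := rfl
    _ ≤ 2 ^ k := Nat.pow_le_pow_right (by omega) hk
    _ ≤ p ^ k := Nat.pow_le_pow_left hp.two_le k
  have hcharP : CharP E p := by
    obtain ⟨r, hr⟩ := CharP.exists E
    haveI := hr
    obtain ⟨m, hrp, hcard⟩ := FiniteField.card E r
    have : r = p := by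
      have h1 : r ∣ p ^ (k * n) := by
        have h2 : (r : ℕ) ∣ Fintype.card E := by
          rw [hcard]; exact dvd_pow_self r m.pos.ne'
        rwa [hE, hqdef, ← pow_mul] at h2
      have := Nat.Prime.dvd_of_dvd_pow hrp h1
      exact (Nat.prime_dvd_prime_iff_eq hrp hp).mp this
    rwa [this] at hr
  haveI := hcharP
  have hkey := key q n ⟨p, k, hp, hk, hqdef⟩ hn E hE
  have hpart1 : ∀ (a : ℕ → E) (u : E), u ^ q = u →
      (∀ x : E, x ≠ 0 →
        ∑ j ∈ Finset.range n,
          (a 0 + ∑ i ∈ Finset.Icc 1 (n - 1), a i * x ^ (q ^ i - 1)) ^ q ^ j = u) →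
      (∀ i : ℕ, 1 ≤ i → i ≤ n - 1 → a i = 0) ∧
        ∑ j ∈ Finset.range n, (a 0) ^ q ^ j = u := by
    intro a u _ hx
    refine hkey a u fun x hx' => ?_
    rw [← inner_rw hn a x]
    exact hx x hx'
  refine ⟨hpart1, ?_⟩
  -- Part 2: counting
  have fadd : ∀ (y z : E) (j : ℕ), (y + z) ^ q ^ j = y ^ q ^ j + z ^ q ^ j := by
    intro y z j
    have h : q ^ j = p ^ (k * j) := by rw [hqdef, ← pow_mul]
    rw [h, add_pow_char_pow]
  set ex : (Fin n → E) → ℕ → E := fun a i => if h : i < n then a ⟨i, h⟩ else 0 with hex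
  set φ : (Fin n → E) →+ ({x : E // x ≠ 0} → E) :=
    AddMonoidHom.mk' (fun a => fun x => ∑ j ∈ Finset.range n,
      (∑ i ∈ Finset.range n, ex a i * (x : E) ^ (q ^ i - 1)) ^ q ^ j) (by
        intro a b
        funext x
        show ∑ j ∈ Finset.range n,
            (∑ i ∈ Finset.range n, ex (a + b) i * (x : E) ^ (q ^ i - 1)) ^ q ^ j
          = (∑ j ∈ Finset.range n,
              (∑ i ∈ Finset.range n, ex a i * (x : E) ^ (q ^ i - 1)) ^ q ^ j)
            + ∑ j ∈ Finset.range n,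
              (∑ i ∈ Finset.range n, ex b i * (x : E) ^ (q ^ i - 1)) ^ q ^ j
        rw [← Finset.sum_add_distrib]
        refine Finset.sum_congr rfl fun j _ => ?_
        rw [← fadd]
        congr 1
        rw [← Finset.sum_add_distrib]
        refine Finset.sum_congr rfl fun i _ => ?_
        have h1 : ex (a + b) i = ex a i + ex b i := by
          simp only [hex]
          split
          · simp
          · simp
        rw [h1, add_mul]) with hφ
  have hker_iff : ∀ a : Fin n → E, φ a = 0 →
      (∀ i : ℕ, 1 ≤ i → i ≤ n - 1 → ex a i = 0) ∧
        ∑ j ∈ Finset.range n, (ex a 0) ^ q ^ j = 0 := by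
    intro a ha
    refine hkey (ex a) 0 fun x hx => ?_
    have h1 := congrFun ha ⟨x, hx⟩
    exact h1
  have hker_card : Nat.card ↥φ.ker = q ^ (n - 1) := by
    rw [← trace_ker_card q n p k hp hk hqdef hn E hE]
    refine Nat.card_congr ?_
    have toV : ∀ aa : ↥φ.ker, ∑ j ∈ Finset.range n, (aa.1 ⟨0, hn0⟩) ^ q ^ j = 0 := by
      intro aa
      have h := (hker_iff aa.1 ((AddMonoidHom.mem_ker).mp aa.2)).2
      have h2 : ex aa.1 0 = aa.1 ⟨0, hn0⟩ := by simp [hex, hn0]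
      rwa [h2] at h
    have invV : ∀ c : E, (∑ j ∈ Finset.range n, c ^ q ^ j = 0) →
        (fun i : Fin n => if (i : ℕ) = 0 then c else 0) ∈ φ.ker := by
      intro c hc
      rw [AddMonoidHom.mem_ker]
      funext x
      show ∑ j ∈ Finset.range n,
          (∑ i ∈ Finset.range n,
            ex (fun i : Fin n => if (i : ℕ) = 0 then c else 0) i * (x : E) ^ (q ^ i - 1)) ^ q ^ j
        = 0
      have hinner : ∑ i ∈ Finset.range n,
          ex (fun i : Fin n => if (i : ℕ) = 0 then c else 0) i * (x : E) ^ (q ^ i - 1) = c := by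
        rw [Finset.sum_eq_single_of_mem 0 (Finset.mem_range.mpr hn0)]
        · simp [hex, hn0]
        · intro i hi hi0
          simp [hex, Finset.mem_range.mp hi, hi0]
      rw [Finset.sum_congr rfl fun j _ => by rw [hinner]]
      exact hc
    refine ⟨fun aa => ⟨aa.1 ⟨0, hn0⟩, toV aa⟩,
            fun cc => ⟨fun i => if (i : ℕ) = 0 then cc.1 else 0, invV cc.1 cc.2⟩,
            ?_, ?_⟩
    · intro aa
      refine Subtype.ext (funext fun i => ?_)
      by_cases h : (i : ℕ) = 0
      · have hi : i = ⟨0, hn0⟩ := Fin.ext h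
        simp [hi]
      · show (if (i : ℕ) = 0 then aa.1 ⟨0, hn0⟩ else 0) = aa.1 i
        rw [if_neg h]
        have h1 := (hker_iff aa.1 ((AddMonoidHom.mem_ker).mp aa.2)).1 (i : ℕ)
          (by omega) (by have := i.isLt; omega)
        have h2 : ex aa.1 (i : ℕ) = aa.1 i := by simp [hex, i.isLt]
        rw [h2] at h1
        exact h1.symm
    · intro cc
      exact Subtype.ext (by simp)
  have hS : {f : {x : E // x ≠ 0} → E | ∃ a : ℕ → E, ∀ x : {x : E // x ≠ 0},
        f x = ∑ j ∈ Finset.range n,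
          (a 0 + ∑ i ∈ Finset.Icc 1 (n - 1), a i * (x : E) ^ (q ^ i - 1)) ^ q ^ j}
      = (φ.range : Set ({x : E // x ≠ 0} → E)) := by
    ext f
    simp only [Set.mem_setOf_eq, SetLike.mem_coe, AddMonoidHom.mem_range]
    constructor
    · rintro ⟨a, ha⟩
      refine ⟨fun i => a (i : ℕ), ?_⟩
      funext x
      rw [ha x, inner_rw hn]
      show ∑ j ∈ Finset.range n,
          (∑ i ∈ Finset.range n, ex (fun i : Fin n => a (i : ℕ)) i * (x : E) ^ (q ^ i - 1)) ^ q ^ j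
        = ∑ j ∈ Finset.range n, (∑ i ∈ Finset.range n, a i * (x : E) ^ (q ^ i - 1)) ^ q ^ j
      refine Finset.sum_congr rfl fun j _ => ?_
      congr 1
      refine Finset.sum_congr rfl fun i hi => ?_
      simp [hex, Finset.mem_range.mp hi]
    · rintro ⟨b, rfl⟩
      refine ⟨ex b, fun x => ?_⟩
      rw [inner_rw hn]
      rfl
  rw [hS]
  have hGcard : Nat.card (Fin n → E) = q ^ (n * n) := by
    rw [Nat.card_eq_fintype_card, Fintype.card_fun, hE, Fintype.card_fin, ← pow_mul]
  have h1 : Nat.card (Fin n → E) = Nat.card ↥φ.range * Nat.card ↥φ.ker := by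
    rw [AddSubgroup.card_eq_card_quotient_mul_card_addSubgroup φ.ker]
    congr 1
    exact Nat.card_congr (QuotientAddGroup.quotientKerEquivRange φ).toEquiv
  rw [hker_card, hGcard] at h1
  have hsq : n ^ 2 = n * n := sq n
  have hle : n ≤ n * n := by
    calc n = 1 * n := (one_mul n).symm
    _ ≤ n * n := Nat.mul_le_mul hn (le_refl n)
  have hsplit : n * n = (n ^ 2 - n + 1) + (n - 1) := by
    obtain ⟨N, hN⟩ : ∃ N, N = n * n := ⟨_, rfl⟩
    rw [hsq, ← hN]
    rw [← hN] at hle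
    omega
  have h2 : q ^ (n * n) = q ^ (n ^ 2 - n + 1) * q ^ (n - 1) := by
    rw [← pow_add, ← hsplit]
  rw [h2] at h1
  have hpos : 0 < q ^ (n - 1) := by positivity
  have hr : Nat.card ↥φ.range = q ^ (n ^ 2 - n + 1) :=
    (Nat.eq_of_mul_eq_mul_right hpos h1).symm
  rw [← hr]
  exact (Nat.card_coe_set_eq _).symm
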